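/- With O_k denoting the infimum over 𝔖_k of g_{S_k}, one has O_k ≤ 9/8 for all k ≥ 3, and lim_{k→∞} O_k = 9/8. -/

import Mathlib

open Finset Filter

open Finset Filter

/-- Membership in the affine set 𝔖ₖ. -/
def inSk (k : ℕ) (C : Fin k → Matrix (Fin k) (Fin k) ℝ) : Prop :=
  ∀ ℓ : Fin k,
    (∀ i : Fin k, i ≠ ℓ → ∑ j, C ℓ i j = 0) ∧
    (∀ j : Fin k, j ≠ ℓ → ∑ i, C ℓ i j = 0) ∧
    (∑ i, ∑ j, C ℓ i j = 1)

/-- A k-sample: nonempty subset of [k]×[k] with pairwise distinct second coordinates. -/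
def IsSample {k : ℕ} (s : Finset (Fin k × Fin k)) : Prop :=
  s.Nonempty ∧ ∀ p ∈ s, ∀ q ∈ s, p ≠ q → p.2 ≠ q.2

/-- g_s^{(ℓ)}(C) -/
def gPart {k : ℕ} (s : Finset (Fin k × Fin k)) (C : Fin k → Matrix (Fin k) (Fin k) ℝ)
    (ℓ : Fin k) : ℝ :=
  ∑ p ∈ s, C ℓ p.1 p.2

/-- g_s(C) -/
def gSample {k : ℕ} (s : Finset (Fin k × Fin k)) (C : Fin k → Matrix (Fin k) (Fin k) ℝ) : ℝ :=
  ∑ ℓ : Fin k, |gPart s C ℓ|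

/-- g_{S_k}(C) : the maximum of g_s(C) over all k-samples s. -/
noncomputable def gMax (k : ℕ) (C : Fin k → Matrix (Fin k) (Fin k) ℝ) : ℝ :=
  ⨆ s : {s : Finset (Fin k × Fin k) // IsSample s}, gSample s.1 C

/-- multiplicity of ℓ in the multiset of coordinates of elements of s -/
def mult {k : ℕ} (s : Finset (Fin k × Fin k)) (ℓ : Fin k) : ℕ :=
  (s.filter (fun p => p.1 = ℓ)).card + (s.filter (fun p => p.2 = ℓ)).card

/-- β(s): number of distinct indices among coordinates of s -/
def beta {k : ℕ} (s : Finset (Fin k × Fin k)) : ℕ :=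
  (s.image Prod.fst ∪ s.image Prod.snd).card

/-- γ(s): number of diagonal elements of s -/
def gamma {k : ℕ} (s : Finset (Fin k × Fin k)) : ℕ :=
  (s.filter (fun p => p.1 = p.2)).card

/-- the strong homogeneous flow C*_k -/
noncomputable def Cstar (k : ℕ) : Fin k → Matrix (Fin k) (Fin k) ℝ :=
  fun ℓ i j =>
    if i = ℓ ∧ j = ℓ then 2/(k:ℝ) - 1/(k:ℝ)^2
    else if i = ℓ ∨ j = ℓ then 1/(k:ℝ) - 1/(k:ℝ)^2
    else -1/(k:ℝ)^2

/-- the Sym(k)-invariant tuple with parameters x (i=j=ℓ), y (i=j≠ℓ),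
a (exactly one of i,j equals ℓ), b (otherwise) -/
def Cfix (k : ℕ) (x y a b : ℝ) : Fin k → Matrix (Fin k) (Fin k) ℝ :=
  fun ℓ i j =>
    if i = ℓ ∧ j = ℓ then x
    else if i = j then y
    else if i = ℓ ∨ j = ℓ then a
    else b

/-- The Sym(k)-action on tuples of matrices. -/
def permAct {k : ℕ} (σ : Equiv.Perm (Fin k)) (C : Fin k → Matrix (Fin k) (Fin k) ℝ) :
    Fin k → Matrix (Fin k) (Fin k) ℝ :=
  fun ℓ i j => C (σ⁻¹ ℓ) (σ⁻¹ i) (σ⁻¹ j)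

/-- optimal value O_k -/
noncomputable def Ovalue (k : ℕ) : ℝ := sInf {y | ∃ C, inSk k C ∧ gMax k C = y}


section counting
variable {α : Type*} [DecidableEq α]

variable {α : Type*} [DecidableEq α]

lemma sum_pow_card (s : Finset α) (l : ℝ) :
    ∑ J ∈ s.powerset, l ^ J.card = (1 + l) ^ s.card := by
  have h := Finset.prod_add (fun _ : α => l) (fun _ : α => (1 : ℝ)) s
  simp only [Finset.prod_const, Finset.prod_const_one, mul_one, one_pow] at h
  rw [add_comm l 1] at h
  rw [← h]

/-- master counting lemma -/
lemma sum_pow_card_subset (s P : Finset α) (hP : P ⊆ s) (l : ℝ) :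
    ∑ J ∈ s.powerset, (if P ⊆ J then l ^ J.card else 0)
      = l ^ P.card * (1 + l) ^ (s.card - P.card) := by
  rw [← Finset.sum_filter]
  have hbij : ∑ J ∈ (s.powerset.filter fun J => P ⊆ J), l ^ J.card
      = ∑ K ∈ (s \ P).powerset, l ^ (K.card + P.card) := by
    apply Finset.sum_nbij' (fun J => J \ P) (fun K => K ∪ P)
    · intro J hJ
      simp only [Finset.mem_filter, Finset.mem_powerset] at hJ
      simp only [Finset.mem_powerset]
      exact Finset.sdiff_subset_sdiff hJ.1 le_rfl
    · intro K hK
      simp only [Finset.mem_powerset] at hK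
      simp only [Finset.mem_filter, Finset.mem_powerset]
      constructor
      · exact Finset.union_subset (hK.trans (Finset.sdiff_subset)) hP
      · exact Finset.subset_union_right
    · intro J hJ
      simp only [Finset.mem_filter, Finset.mem_powerset] at hJ
      exact Finset.sdiff_union_of_subset hJ.2
    · intro K hK
      simp only [Finset.mem_powerset] at hK
      have : Disjoint K P := Finset.disjoint_of_subset_left hK Finset.sdiff_disjoint
      rw [Finset.union_sdiff_cancel_right this]
    · intro J hJ
      simp only [Finset.mem_filter, Finset.mem_powerset] at hJ
      rw [Finset.card_sdiff_of_subset hJ.2, Nat.sub_add_cancel (Finset.card_le_card hJ.2)]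
  rw [hbij]
  have : ∀ K ∈ (s \ P).powerset, l ^ (K.card + P.card) = l ^ P.card * l ^ K.card := by
    intro K _; rw [pow_add]; ring
  rw [Finset.sum_congr rfl this, ← Finset.mul_sum, sum_pow_card, Finset.card_sdiff_of_subset hP]


variable [Fintype α]


lemma sum1_ite (J : Finset α) (g : α → ℝ) :
    ∑ i ∈ J, g i = ∑ i, if i ∈ J then g i else 0 := by
  rw [Finset.sum_ite_mem, Finset.univ_inter]

lemma sum2_ite (J : Finset α) (g : α → α → ℝ) :
    ∑ p ∈ J, ∑ j ∈ J, g p j = ∑ p, ∑ j, if p ∈ J ∧ j ∈ J then g p j else 0 := by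
  rw [sum1_ite]
  apply Finset.sum_congr rfl; intro p _
  by_cases hp : p ∈ J
  · simp only [hp, if_true, true_and]; rw [sum1_ite]
  · simp [hp]

lemma sum3_ite (J : Finset α) (g : α → α → α → ℝ) :
    ∑ i ∈ J, ∑ p ∈ J, ∑ j ∈ J, g i p j
      = ∑ i, ∑ p, ∑ j, if i ∈ J ∧ p ∈ J ∧ j ∈ J then g i p j else 0 := by
  rw [sum1_ite]
  apply Finset.sum_congr rfl; intro i _
  by_cases hi : i ∈ J
  · simp only [hi, if_true, true_and]; exact sum2_ite J (g i)
  · simp [hi]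

lemma swap1 (l : ℝ) (g : α → ℝ) :
    ∑ J ∈ (univ : Finset α).powerset, l ^ J.card * (∑ i ∈ J, g i)
    = ∑ i, l ^ (({i} : Finset α).card) * (1+l) ^ (Fintype.card α - ({i} : Finset α).card) * g i := by
  have h1 : ∀ J ∈ (univ : Finset α).powerset, l ^ J.card * (∑ i ∈ J, g i)
      = ∑ i, if ({i} : Finset α) ⊆ J then l ^ J.card * g i else 0 := by
    intro J _
    rw [Finset.mul_sum, sum1_ite]
    simp only [Finset.singleton_subset_iff]
  rw [Finset.sum_congr rfl h1, Finset.sum_comm]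
  apply Finset.sum_congr rfl; intro i _
  have h2 : ∀ J ∈ (univ : Finset α).powerset,
      (if ({i} : Finset α) ⊆ J then l ^ J.card * g i else 0)
      = (if ({i} : Finset α) ⊆ J then l ^ J.card else 0) * g i := by
    intro J _; split_ifs <;> simp
  rw [Finset.sum_congr rfl h2, ← Finset.sum_mul,
    sum_pow_card_subset _ _ (Finset.subset_univ _), Finset.card_univ]

lemma swap2 (l : ℝ) (g : α → α → ℝ) :
    ∑ J ∈ (univ : Finset α).powerset, l ^ J.card * (∑ p ∈ J, ∑ j ∈ J, g p j)
    = ∑ p, ∑ j, l ^ (({p,j} : Finset α).card) * (1+l) ^ (Fintype.card α - ({p,j} : Finset α).card) * g p j := by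
  have h1 : ∀ J ∈ (univ : Finset α).powerset, l ^ J.card * (∑ p ∈ J, ∑ j ∈ J, g p j)
      = ∑ p, ∑ j, if ({p,j} : Finset α) ⊆ J then l ^ J.card * g p j else 0 := by
    intro J _
    simp only [Finset.mul_sum]
    rw [sum2_ite]
    simp only [Finset.insert_subset_iff, Finset.singleton_subset_iff]
  rw [Finset.sum_congr rfl h1, Finset.sum_comm]
  apply Finset.sum_congr rfl; intro p _
  rw [Finset.sum_comm]
  apply Finset.sum_congr rfl; intro j _
  have h2 : ∀ J ∈ (univ : Finset α).powerset,
      (if ({p,j} : Finset α) ⊆ J then l ^ J.card * g p j else 0)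
      = (if ({p,j} : Finset α) ⊆ J then l ^ J.card else 0) * g p j := by
    intro J _; split_ifs <;> simp
  rw [Finset.sum_congr rfl h2, ← Finset.sum_mul,
    sum_pow_card_subset _ _ (Finset.subset_univ _), Finset.card_univ]

lemma swap3 (l : ℝ) (f : α → α → α → ℝ) :
    ∑ J ∈ (univ : Finset α).powerset, l ^ J.card * (∑ i ∈ J, ∑ p ∈ J, ∑ j ∈ J, f i p j)
    = ∑ i, ∑ p, ∑ j, l ^ (({i,p,j} : Finset α).card) * (1+l) ^ (Fintype.card α - ({i,p,j} : Finset α).card) * f i p j := by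
  have h1 : ∀ J ∈ (univ : Finset α).powerset, l ^ J.card * (∑ i ∈ J, ∑ p ∈ J, ∑ j ∈ J, f i p j)
      = ∑ i, ∑ p, ∑ j, if ({i,p,j} : Finset α) ⊆ J then l ^ J.card * f i p j else 0 := by
    intro J _
    simp only [Finset.mul_sum]
    rw [sum3_ite]
    simp only [Finset.insert_subset_iff, Finset.singleton_subset_iff]
  rw [Finset.sum_congr rfl h1, Finset.sum_comm]
  apply Finset.sum_congr rfl; intro i _
  rw [Finset.sum_comm]
  apply Finset.sum_congr rfl; intro p _
  rw [Finset.sum_comm]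
  apply Finset.sum_congr rfl; intro j _
  have h2 : ∀ J ∈ (univ : Finset α).powerset,
      (if ({i,p,j} : Finset α) ⊆ J then l ^ J.card * f i p j else 0)
      = (if ({i,p,j} : Finset α) ⊆ J then l ^ J.card else 0) * f i p j := by
    intro J _; split_ifs <;> simp
  rw [Finset.sum_congr rfl h2, ← Finset.sum_mul,
    sum_pow_card_subset _ _ (Finset.subset_univ _), Finset.card_univ]


end counting

section basics

variable {k : ℕ}

lemma gSample_nonneg (s : Finset (Fin k × Fin k)) (C : Fin k → Matrix (Fin k) (Fin k) ℝ) :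
    0 ≤ gSample s C :=
  Finset.sum_nonneg fun _ _ => abs_nonneg _

lemma gSample_le_gMax {s : Finset (Fin k × Fin k)} (hs : IsSample s)
    (C : Fin k → Matrix (Fin k) (Fin k) ℝ) : gSample s C ≤ gMax k C := by
  have hfin : (Set.range fun t : {s : Finset (Fin k × Fin k) // IsSample s} => gSample t.1 C).Finite :=
    Set.finite_range _
  exact le_ciSup hfin.bddAbove (⟨s, hs⟩ : {s : Finset (Fin k × Fin k) // IsSample s})

lemma isSample_row (i : Fin k) (J : Finset (Fin k)) (hJ : J.Nonempty) :
    IsSample (J.image fun j => ((i, j) : Fin k × Fin k)) := by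
  constructor
  · exact hJ.image _
  · intro p hp q hq hpq
    simp only [Finset.mem_image] at hp hq
    obtain ⟨a, _, rfl⟩ := hp
    obtain ⟨b, _, rfl⟩ := hq
    intro h
    dsimp only at h
    subst h
    exact hpq rfl

lemma isSample_diag (T : Finset (Fin k)) (hT : T.Nonempty) :
    IsSample (T.image fun t => ((t, t) : Fin k × Fin k)) := by
  constructor
  · exact hT.image _
  · intro p hp q hq hpq
    simp only [Finset.mem_image] at hp hq
    obtain ⟨a, _, rfl⟩ := hp
    obtain ⟨b, _, rfl⟩ := hq
    intro h
    dsimp only at h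
    subst h
    exact hpq rfl

lemma gPart_row (i : Fin k) (J : Finset (Fin k)) (C : Fin k → Matrix (Fin k) (Fin k) ℝ)
    (ℓ : Fin k) : gPart (J.image fun j => ((i, j) : Fin k × Fin k)) C ℓ = ∑ j ∈ J, C ℓ i j := by
  unfold gPart
  rw [Finset.sum_image]
  intro a _ b _ h
  simpa using h

lemma gPart_diag (T : Finset (Fin k)) (C : Fin k → Matrix (Fin k) (Fin k) ℝ)
    (ℓ : Fin k) : gPart (T.image fun t => ((t, t) : Fin k × Fin k)) C ℓ = ∑ t ∈ T, C ℓ t t := by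
  unfold gPart
  rw [Finset.sum_image]
  intro a _ b _ h
  simpa using h

lemma gMax_nonneg (hk : 0 < k) (C : Fin k → Matrix (Fin k) (Fin k) ℝ) : 0 ≤ gMax k C := by
  haveI : NeZero k := ⟨hk.ne'⟩
  have h := gSample_le_gMax (isSample_diag {(0 : Fin k)} (Finset.singleton_nonempty _)) C
  exact le_trans (gSample_nonneg _ C) h

/-- the central trick : signed sum is at most gSample -/
lemma signed_le_gSample (s : Finset (Fin k × Fin k)) (C : Fin k → Matrix (Fin k) (Fin k) ℝ)
    (T : Finset (Fin k)) :
    2 * (∑ ℓ ∈ T, gPart s C ℓ) - ∑ ℓ, gPart s C ℓ ≤ gSample s C := by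
  classical
  have hsplit : ∑ ℓ, gPart s C ℓ = ∑ ℓ ∈ T, gPart s C ℓ + ∑ ℓ ∈ univ \ T, gPart s C ℓ := by
    rw [add_comm, Finset.sum_sdiff (Finset.subset_univ T)]
  have h1 : ∑ ℓ ∈ T, gPart s C ℓ ≤ ∑ ℓ ∈ T, |gPart s C ℓ| :=
    Finset.sum_le_sum fun ℓ _ => le_abs_self _
  have h2 : -∑ ℓ ∈ univ \ T, gPart s C ℓ ≤ ∑ ℓ ∈ univ \ T, |gPart s C ℓ| := by
    rw [← Finset.sum_neg_distrib]
    exact Finset.sum_le_sum fun ℓ _ => neg_le_abs _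
  have habs : gSample s C = ∑ ℓ ∈ T, |gPart s C ℓ| + ∑ ℓ ∈ univ \ T, |gPart s C ℓ| := by
    unfold gSample
    rw [add_comm, Finset.sum_sdiff (Finset.subset_univ T)]
  rw [habs, hsplit]; linarith


end basics

section lower
variable {k : ℕ}

lemma row_one {C : Fin k → Matrix (Fin k) (Fin k) ℝ} (hC : inSk k C) (ℓ : Fin k) :
    ∑ j, C ℓ ℓ j = 1 := by
  have htot := (hC ℓ).2.2
  rwa [Finset.sum_eq_single ℓ (fun i _ hne => (hC ℓ).1 i hne) (by simp)] at htot

lemma col_one {C : Fin k → Matrix (Fin k) (Fin k) ℝ} (hC : inSk k C) (ℓ : Fin k) :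
    ∑ i, C ℓ i ℓ = 1 := by
  have htot := (hC ℓ).2.2
  rw [show (∑ i, ∑ j, C ℓ i j) = ∑ j, ∑ i, C ℓ i j from Finset.sum_comm] at htot
  rwa [Finset.sum_eq_single ℓ (fun j _ hne => (hC ℓ).2.1 j hne) (by simp)] at htot

/-- F-family : singleton diagonal samples -/
lemma hF_ineq (hk : 0 < k) (C : Fin k → Matrix (Fin k) (Fin k) ℝ) :
    -(∑ ℓ, ∑ i, C ℓ i i) ≤ (k : ℝ) * gMax k C := by
  have hpt : ∀ t : Fin k, -(∑ ℓ, C ℓ t t) ≤ gMax k C := by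
    intro t
    have h1 := signed_le_gSample (({t} : Finset (Fin k)).image fun t => ((t, t) : Fin k × Fin k)) C ∅
    simp only [Finset.sum_empty, mul_zero, zero_sub] at h1
    have h2 : ∀ ℓ, gPart (({t} : Finset (Fin k)).image fun t => ((t, t) : Fin k × Fin k)) C ℓ
        = C ℓ t t := by
      intro ℓ; rw [gPart_diag]; simp
    rw [Finset.sum_congr rfl (fun ℓ _ => h2 ℓ)] at h1
    exact h1.trans (gSample_le_gMax (isSample_diag _ (Finset.singleton_nonempty t)) C)
  have hsum : ∑ t : Fin k, -(∑ ℓ, C ℓ t t) ≤ ∑ _t : Fin k, gMax k C :=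
    Finset.sum_le_sum fun t _ => hpt t
  simp only [Finset.sum_neg_distrib, Finset.sum_const, Finset.card_univ, Fintype.card_fin,
    nsmul_eq_mul] at hsum
  rwa [Finset.sum_comm]  at hsum

/-- D-family coefficient computation -/
lemma Dcoef (n : ℕ) (μ : ℝ) (ℓ t : Fin (n+3)) :
    2 * (μ ^ (({ℓ,t} : Finset (Fin (n+3))).card) * (1+μ) ^ ((n+3) - (({ℓ,t} : Finset (Fin (n+3))).card)))
      - μ * (1+μ) ^ (n+2)
    = μ * (1+μ)^(n+1) * ((μ - 1) + (if ℓ = t then 2 else 0)) := by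
  by_cases h : ℓ = t
  · subst h
    have hs : ({ℓ,ℓ} : Finset (Fin (n+3))) = {ℓ} := by simp
    rw [hs, Finset.card_singleton, if_pos rfl, show n + 3 - 1 = n + 2 by omega, pow_one]
    ring
  · have hcard : ({ℓ,t} : Finset (Fin (n+3))).card = 2 := Finset.card_pair h
    rw [hcard, if_neg h]
    rw [show n + 3 - 2 = n + 1 by omega, pow_succ]
    ring

/-- D-family inequality -/
lemma hD_ineq (n : ℕ) {C : Fin (n+3) → Matrix (Fin (n+3)) (Fin (n+3)) ℝ}
    (hC : inSk (n+3) C) (μ : ℝ) (hμ : 0 < μ) :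
    μ * ((μ - 1) * (∑ ℓ, ∑ i, C ℓ i i) + 2 * (∑ ℓ, C ℓ ℓ ℓ))
      ≤ (1+μ)^2 * gMax (n+3) C := by
  have hg0 : 0 ≤ gMax (n+3) C := gMax_nonneg (by omega) C
  -- the weighted sum over all subsets
  have hbound : ∑ T ∈ (univ : Finset (Fin (n+3))).powerset, μ ^ T.card *
        (2 * (∑ ℓ ∈ T, ∑ t ∈ T, C ℓ t t) - ∑ ℓ, ∑ t ∈ T, C ℓ t t)
      ≤ (1+μ)^(n+3) * gMax (n+3) C := by
    have hper : ∀ T ∈ (univ : Finset (Fin (n+3))).powerset,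
        μ ^ T.card * (2 * (∑ ℓ ∈ T, ∑ t ∈ T, C ℓ t t) - ∑ ℓ, ∑ t ∈ T, C ℓ t t)
        ≤ μ ^ T.card * gMax (n+3) C := by
      intro T _
      apply mul_le_mul_of_nonneg_left _ (le_of_lt (pow_pos hμ _))
      rcases T.eq_empty_or_nonempty with rfl | hne
      · simpa using hg0
      · have h1 := signed_le_gSample (T.image fun t => ((t, t) : Fin (n+3) × Fin (n+3))) C T
        have h2 : ∀ ℓ, gPart (T.image fun t => ((t, t) : Fin (n+3) × Fin (n+3))) C ℓ = ∑ t ∈ T, C ℓ t t :=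
          fun ℓ => gPart_diag T C ℓ
        rw [Finset.sum_congr rfl (fun ℓ _ => h2 ℓ), Finset.sum_congr rfl (fun ℓ _ => h2 ℓ)] at h1
        exact h1.trans (gSample_le_gMax (isSample_diag _ hne) C)
    calc ∑ T ∈ (univ : Finset (Fin (n+3))).powerset, μ ^ T.card *
          (2 * (∑ ℓ ∈ T, ∑ t ∈ T, C ℓ t t) - ∑ ℓ, ∑ t ∈ T, C ℓ t t)
        ≤ ∑ T ∈ (univ : Finset (Fin (n+3))).powerset, μ ^ T.card * gMax (n+3) C :=
          Finset.sum_le_sum hper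
      _ = (1+μ)^(n+3) * gMax (n+3) C := by rw [← Finset.sum_mul, sum_pow_card, Finset.card_univ, Fintype.card_fin]
  -- identity for the weighted sum
  have hid : ∑ T ∈ (univ : Finset (Fin (n+3))).powerset, μ ^ T.card *
        (2 * (∑ ℓ ∈ T, ∑ t ∈ T, C ℓ t t) - ∑ ℓ, ∑ t ∈ T, C ℓ t t)
      = μ * (1+μ)^(n+1) * ((μ - 1) * (∑ ℓ, ∑ i, C ℓ i i) + 2 * (∑ ℓ, C ℓ ℓ ℓ)) := by
    have hsplit : ∀ T ∈ (univ : Finset (Fin (n+3))).powerset, μ ^ T.card *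
          (2 * (∑ ℓ ∈ T, ∑ t ∈ T, C ℓ t t) - ∑ ℓ, ∑ t ∈ T, C ℓ t t)
        = 2 * (μ ^ T.card * (∑ ℓ ∈ T, ∑ t ∈ T, C ℓ t t))
          - μ ^ T.card * (∑ ℓ, ∑ t ∈ T, C ℓ t t) := by
      intro T _; ring
    rw [Finset.sum_congr rfl hsplit, Finset.sum_sub_distrib, ← Finset.mul_sum]
    rw [swap2 μ (fun ℓ t => C ℓ t t)]
    -- second piece : move ∑ ℓ out
    have hsecond : ∑ T ∈ (univ : Finset (Fin (n+3))).powerset, μ ^ T.card * (∑ ℓ, ∑ t ∈ T, C ℓ t t)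
        = μ * (1+μ)^(n+2) * (∑ ℓ, ∑ t, C ℓ t t) := by
      have h1 : ∀ T ∈ (univ : Finset (Fin (n+3))).powerset,
          μ ^ T.card * (∑ ℓ, ∑ t ∈ T, C ℓ t t) = ∑ ℓ, μ ^ T.card * (∑ t ∈ T, C ℓ t t) := by
        intro T _; rw [Finset.mul_sum]
      rw [Finset.sum_congr rfl h1, Finset.sum_comm]
      have h2 : ∀ ℓ, ∑ T ∈ (univ : Finset (Fin (n+3))).powerset, μ ^ T.card * (∑ t ∈ T, C ℓ t t)
          = μ * (1+μ)^(n+2) * (∑ t, C ℓ t t) := by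
        intro ℓ
        rw [swap1 μ (fun t => C ℓ t t)]
        simp only [Finset.card_singleton, pow_one, Fintype.card_fin,
          show n+3-1 = n+2 from by omega]
        rw [← Finset.mul_sum]
      rw [Finset.sum_congr rfl (fun ℓ _ => h2 ℓ), ← Finset.mul_sum]
    rw [hsecond]
    -- combine pointwise with Dcoef
    have hcomb : 2 * (∑ ℓ, ∑ t, μ ^ (({ℓ,t} : Finset (Fin (n+3))).card) *
          (1+μ) ^ (Fintype.card (Fin (n+3)) - (({ℓ,t} : Finset (Fin (n+3))).card)) * C ℓ t t)
          - μ * (1+μ)^(n+2) * (∑ ℓ, ∑ t, C ℓ t t)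
        = ∑ ℓ, ∑ t, (μ * (1+μ)^(n+1) * ((μ - 1) + (if ℓ = t then 2 else 0))) * C ℓ t t := by
      rw [Finset.mul_sum, Finset.mul_sum, ← Finset.sum_sub_distrib]
      apply Finset.sum_congr rfl; intro ℓ _
      rw [Finset.mul_sum, Finset.mul_sum, ← Finset.sum_sub_distrib]
      apply Finset.sum_congr rfl; intro t _
      rw [Fintype.card_fin]
      linear_combination (C ℓ t t) * Dcoef n μ ℓ t
    rw [hcomb]
    -- evaluate the sum
    have heval : ∑ ℓ, ∑ t, (μ * (1+μ)^(n+1) * ((μ - 1) + (if ℓ = t then 2 else 0))) * C ℓ t t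
        = μ * (1+μ)^(n+1) * ((μ - 1) * (∑ ℓ, ∑ i, C ℓ i i) + 2 * (∑ ℓ, C ℓ ℓ ℓ)) := by
      have hpt : ∀ ℓ t : Fin (n+3), (μ * (1+μ)^(n+1) * ((μ - 1) + (if ℓ = t then 2 else 0))) * C ℓ t t
          = (μ * (1+μ)^(n+1) * (μ-1)) * C ℓ t t
            + (if ℓ = t then (μ * (1+μ)^(n+1) * 2) * C ℓ t t else 0) := by
        intro ℓ t; split_ifs <;> ring
      simp only [hpt, Finset.sum_add_distrib, Finset.sum_ite_eq, Finset.mem_univ, if_true]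
      simp only [← Finset.mul_sum]
      ring
    rw [heval]
  rw [hid] at hbound
  -- divide by (1+μ)^(n+1)
  have hpow : (0:ℝ) < (1+μ)^(n+1) := pow_pos (by linarith) _
  have hkk : (1+μ)^(n+3) = (1+μ)^(n+1) * (1+μ)^2 := by rw [← pow_add]
  rw [hkk] at hbound
  have h3 : (1+μ)^(n+1) * (μ * ((μ - 1) * (∑ ℓ, ∑ i, C ℓ i i) + 2 * (∑ ℓ, C ℓ ℓ ℓ)))
      ≤ (1+μ)^(n+1) * ((1+μ)^2 * gMax (n+3) C) :=
    calc (1+μ)^(n+1) * (μ * ((μ - 1) * (∑ ℓ, ∑ i, C ℓ i i) + 2 * (∑ ℓ, C ℓ ℓ ℓ)))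
        = μ * (1+μ)^(n+1) * ((μ - 1) * (∑ ℓ, ∑ i, C ℓ i i) + 2 * (∑ ℓ, C ℓ ℓ ℓ)) := by ring
      _ ≤ (1 + μ) ^ (n + 1) * (1 + μ) ^ 2 * gMax (n+3) C := hbound
      _ = (1+μ)^(n+1) * ((1+μ)^2 * gMax (n+3) C) := by ring
  exact le_of_mul_le_mul_left h3 hpow
/-- R-family coefficient computation -/
lemma Rcoef (n : ℕ) (i ℓ j : Fin (n+3)) :
    2 * ((3:ℝ) ^ (({i,ℓ,j} : Finset (Fin (n+3))).card) * 4 ^ ((n+3) - (({i,ℓ,j} : Finset (Fin (n+3))).card)))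
      - (3:ℝ) ^ (({i,j} : Finset (Fin (n+3))).card) * 4 ^ ((n+3) - (({i,j} : Finset (Fin (n+3))).card))
    = 4^n * (18 + (if i = j then (6:ℝ) else 0) + (if i = ℓ then 18 else 0)
        + (if j = ℓ then 18 else 0) + (if i = ℓ ∧ j = ℓ then -12 else 0)) := by
  have e2 : (4:ℝ)^(n+2) = 4^n*16 := by rw [show n+2 = n+1+1 by omega, pow_succ, pow_succ]; ring
  have e1 : (4:ℝ)^(n+1) = 4^n*4 := by rw [pow_succ]
  by_cases hij : i = j
  · subst hij
    by_cases hil : i = ℓ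
    · subst hil
      have h3 : ({i,i,i} : Finset (Fin (n+3))) = {i} := by simp
      have h2 : ({i,i} : Finset (Fin (n+3))) = {i} := by simp
      rw [h3, h2, Finset.card_singleton, show n + 3 - 1 = n + 2 by omega]
      norm_num [e2]; ring
    · have h3 : ({i,ℓ,i} : Finset (Fin (n+3))) = {i,ℓ} := by
        ext x; simp [Finset.mem_insert]; tauto
      have h2 : ({i,i} : Finset (Fin (n+3))) = {i} := by simp
      rw [h3, h2, Finset.card_singleton, Finset.card_pair hil,
        show n + 3 - 2 = n + 1 by omega, show n + 3 - 1 = n + 2 by omega]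
      norm_num [e1, e2, hil]; ring
  · by_cases hil : i = ℓ
    · subst hil
      have hjl : ¬ (j = i) := fun h => hij h.symm
      have h3 : ({i,i,j} : Finset (Fin (n+3))) = {i,j} := by simp
      rw [h3, Finset.card_pair hij, show n + 3 - 2 = n + 1 by omega]
      norm_num [e1, hij, hjl]; ring
    · by_cases hjl : j = ℓ
      · subst hjl
        have h3 : ({i,j,j} : Finset (Fin (n+3))) = {i,j} := by
          simp
        rw [h3, Finset.card_pair hij, show n + 3 - 2 = n + 1 by omega]
        norm_num [e1, hij, hil]; ring
      · have h3 : ({i,ℓ,j} : Finset (Fin (n+3))).card = 3 := by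
          rw [Finset.card_insert_of_notMem (by simp [Finset.mem_insert]; tauto),
            Finset.card_pair (fun h => hjl h.symm)]
        rw [h3, Finset.card_pair hij, show n + 3 - 3 = n by omega,
          show n + 3 - 2 = n + 1 by omega]
        norm_num [e1, hij, hil, hjl]; ring

/-- R-family inequality -/
lemma hR_ineq (n : ℕ) {C : Fin (n+3) → Matrix (Fin (n+3)) (Fin (n+3)) ℝ}
    (hC : inSk (n+3) C) :
    9*((n:ℝ)+3) - 2*(∑ ℓ, C ℓ ℓ ℓ) + (∑ ℓ, ∑ i, C ℓ i i)
      ≤ 8*((n:ℝ)+3) * gMax (n+3) C := by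
  have hg0 : 0 ≤ gMax (n+3) C := gMax_nonneg (by omega) C
  -- (a) the bound
  have hbound : ∑ J ∈ (univ : Finset (Fin (n+3))).powerset, (3:ℝ) ^ J.card *
        (∑ i ∈ J, (2 * (∑ ℓ ∈ J, ∑ j ∈ J, C ℓ i j) - ∑ ℓ, ∑ j ∈ J, C ℓ i j))
      ≤ 48 * ((n:ℝ)+3) * 4^n * gMax (n+3) C := by
    have hper : ∀ J ∈ (univ : Finset (Fin (n+3))).powerset,
        (3:ℝ) ^ J.card * (∑ i ∈ J, (2 * (∑ ℓ ∈ J, ∑ j ∈ J, C ℓ i j) - ∑ ℓ, ∑ j ∈ J, C ℓ i j))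
        ≤ (3:ℝ) ^ J.card * ((∑ _i ∈ J, (1:ℝ)) * gMax (n+3) C) := by
      intro J _
      apply mul_le_mul_of_nonneg_left _ (by positivity)
      have hone : (∑ _i ∈ J, (1:ℝ)) * gMax (n+3) C = ∑ _i ∈ J, gMax (n+3) C := by
        rw [Finset.sum_mul]; simp
      rw [hone]
      apply Finset.sum_le_sum
      intro i hi
      have hne : J.Nonempty := ⟨i, hi⟩
      have h1 := signed_le_gSample (J.image fun j => ((i, j) : Fin (n+3) × Fin (n+3))) C J
      have h2 : ∀ ℓ, gPart (J.image fun j => ((i, j) : Fin (n+3) × Fin (n+3))) C ℓ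
          = ∑ j ∈ J, C ℓ i j := fun ℓ => gPart_row i J C ℓ
      rw [Finset.sum_congr rfl (fun ℓ _ => h2 ℓ), Finset.sum_congr rfl (fun ℓ _ => h2 ℓ)] at h1
      exact h1.trans (gSample_le_gMax (isSample_row i J hne) C)
    calc ∑ J ∈ (univ : Finset (Fin (n+3))).powerset, (3:ℝ) ^ J.card *
          (∑ i ∈ J, (2 * (∑ ℓ ∈ J, ∑ j ∈ J, C ℓ i j) - ∑ ℓ, ∑ j ∈ J, C ℓ i j))
        ≤ ∑ J ∈ (univ : Finset (Fin (n+3))).powerset,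
            (3:ℝ) ^ J.card * ((∑ _i ∈ J, (1:ℝ)) * gMax (n+3) C) := Finset.sum_le_sum hper
      _ = (∑ J ∈ (univ : Finset (Fin (n+3))).powerset,
            (3:ℝ) ^ J.card * (∑ _i ∈ J, (1:ℝ))) * gMax (n+3) C := by
          rw [Finset.sum_mul]
          exact Finset.sum_congr rfl fun J _ => by ring
      _ = 48 * ((n:ℝ)+3) * 4^n * gMax (n+3) C := by
          rw [swap1 (3:ℝ) (fun _ => (1:ℝ))]
          simp only [Finset.card_singleton, pow_one, Fintype.card_fin, mul_one,
            show n+3-1 = n+2 from by omega, Finset.sum_const, Finset.card_univ, nsmul_eq_mul]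
          rw [show ((1:ℝ)+3) = 4 by norm_num, show n+2 = n+1+1 by omega, pow_succ, pow_succ]
          push_cast
          ring
  -- (b) the identity
  have hid : ∑ J ∈ (univ : Finset (Fin (n+3))).powerset, (3:ℝ) ^ J.card *
        (∑ i ∈ J, (2 * (∑ ℓ ∈ J, ∑ j ∈ J, C ℓ i j) - ∑ ℓ, ∑ j ∈ J, C ℓ i j))
      = 4^n * (54*((n:ℝ)+3) - 12*(∑ ℓ, C ℓ ℓ ℓ) + 6*(∑ ℓ, ∑ i, C ℓ i i)) := by
    -- split into S3 and S2
    have hsplit : ∀ J ∈ (univ : Finset (Fin (n+3))).powerset, (3:ℝ) ^ J.card *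
          (∑ i ∈ J, (2 * (∑ ℓ ∈ J, ∑ j ∈ J, C ℓ i j) - ∑ ℓ, ∑ j ∈ J, C ℓ i j))
        = 2 * ((3:ℝ) ^ J.card * (∑ i ∈ J, ∑ ℓ ∈ J, ∑ j ∈ J, C ℓ i j))
          - (3:ℝ) ^ J.card * (∑ ℓ, ∑ i ∈ J, ∑ j ∈ J, C ℓ i j) := by
      intro J _
      rw [Finset.sum_sub_distrib, ← Finset.mul_sum,
        Finset.sum_comm (s := J) (t := (univ : Finset (Fin (n+3))))]
      ring
    rw [Finset.sum_congr rfl hsplit, Finset.sum_sub_distrib, ← Finset.mul_sum]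
    rw [swap3 (3:ℝ) (fun i p j => C p i j)]
    -- second piece
    have hsecond : ∑ J ∈ (univ : Finset (Fin (n+3))).powerset,
          (3:ℝ) ^ J.card * (∑ ℓ, ∑ i ∈ J, ∑ j ∈ J, C ℓ i j)
        = ∑ ℓ, ∑ i, ∑ j, (3:ℝ) ^ (({i,j} : Finset (Fin (n+3))).card)
            * 4 ^ ((n+3) - (({i,j} : Finset (Fin (n+3))).card)) * C ℓ i j := by
      have h1 : ∀ J ∈ (univ : Finset (Fin (n+3))).powerset,
          (3:ℝ) ^ J.card * (∑ ℓ, ∑ i ∈ J, ∑ j ∈ J, C ℓ i j)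
          = ∑ ℓ, (3:ℝ) ^ J.card * (∑ i ∈ J, ∑ j ∈ J, C ℓ i j) := by
        intro J _; rw [Finset.mul_sum]
      rw [Finset.sum_congr rfl h1, Finset.sum_comm]
      apply Finset.sum_congr rfl; intro ℓ _
      have := swap2 (3:ℝ) (fun i j => C ℓ i j)
      rw [this]
      simp only [Fintype.card_fin]
      norm_num
    rw [hsecond]
    -- reorder the ℓ,i,j sums of the second piece and merge
    have hreord : ∑ ℓ, ∑ i, ∑ j, (3:ℝ) ^ (({i,j} : Finset (Fin (n+3))).card)
            * 4 ^ ((n+3) - (({i,j} : Finset (Fin (n+3))).card)) * C ℓ i j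
        = ∑ i, ∑ ℓ, ∑ j, (3:ℝ) ^ (({i,j} : Finset (Fin (n+3))).card)
            * 4 ^ ((n+3) - (({i,j} : Finset (Fin (n+3))).card)) * C ℓ i j := by
      rw [Finset.sum_comm]
    rw [hreord]
    have hmerge : 2 * (∑ i, ∑ p, ∑ j, (3:ℝ) ^ (({i,p,j} : Finset (Fin (n+3))).card)
            * (1+3) ^ (Fintype.card (Fin (n+3)) - (({i,p,j} : Finset (Fin (n+3))).card)) * C p i j)
          - ∑ i, ∑ ℓ, ∑ j, (3:ℝ) ^ (({i,j} : Finset (Fin (n+3))).card)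
            * 4 ^ ((n+3) - (({i,j} : Finset (Fin (n+3))).card)) * C ℓ i j
        = ∑ i, ∑ ℓ, ∑ j, (4:ℝ)^n * (18 + (if i = j then (6:ℝ) else 0) + (if i = ℓ then 18 else 0)
            + (if j = ℓ then 18 else 0) + (if i = ℓ ∧ j = ℓ then -12 else 0)) * C ℓ i j := by
      rw [Finset.mul_sum, ← Finset.sum_sub_distrib]
      apply Finset.sum_congr rfl; intro i _
      rw [Finset.mul_sum, ← Finset.sum_sub_distrib]
      apply Finset.sum_congr rfl; intro ℓ _
      rw [Finset.mul_sum, ← Finset.sum_sub_distrib]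
      apply Finset.sum_congr rfl; intro j _
      have hnorm : ((1:ℝ)+3) = 4 := by norm_num
      rw [hnorm, Fintype.card_fin]
      linear_combination (C ℓ i j) * Rcoef n i ℓ j
    rw [hmerge]
    -- now evaluate the five pieces
    have hexp : ∀ i ℓ j : Fin (n+3), (4:ℝ)^n * (18 + (if i = j then (6:ℝ) else 0)
          + (if i = ℓ then 18 else 0) + (if j = ℓ then 18 else 0)
          + (if i = ℓ ∧ j = ℓ then -12 else 0)) * C ℓ i j
        = (4:ℝ)^n * 18 * C ℓ i j
          + (if i = j then (4:ℝ)^n * 6 * C ℓ i j else 0)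
          + (if i = ℓ then (4:ℝ)^n * 18 * C ℓ i j else 0)
          + (if j = ℓ then (4:ℝ)^n * 18 * C ℓ i j else 0)
          + (if i = ℓ ∧ j = ℓ then (4:ℝ)^n * (-12) * C ℓ i j else 0) := by
      intro i ℓ j; split_ifs <;> ring
    simp only [hexp, Finset.sum_add_distrib]
    -- piece 0 : full sum
    have hp0 : ∑ i : Fin (n+3), ∑ ℓ, ∑ j, (4:ℝ)^n * 18 * C ℓ i j
        = (4:ℝ)^n * 18 * ((n:ℝ)+3) := by
      rw [Finset.sum_comm]
      have : ∀ ℓ : Fin (n+3), ∑ i, ∑ j, (4:ℝ)^n * 18 * C ℓ i j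
          = (4:ℝ)^n * 18 * 1 := by
        intro ℓ
        simp only [← Finset.mul_sum]
        rw [(hC ℓ).2.2]
      rw [Finset.sum_congr rfl fun ℓ _ => this ℓ, Finset.sum_const, Finset.card_univ,
        Fintype.card_fin, nsmul_eq_mul]
      push_cast; ring
    -- piece 1 : diagonal i = j
    have hp1 : ∑ i : Fin (n+3), ∑ ℓ, ∑ j, (if i = j then (4:ℝ)^n * 6 * C ℓ i j else 0)
        = (4:ℝ)^n * 6 * (∑ ℓ, ∑ i, C ℓ i i) := by
      have h1 : ∀ i ℓ : Fin (n+3), ∑ j, (if i = j then (4:ℝ)^n * 6 * C ℓ i j else 0)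
          = (4:ℝ)^n * 6 * C ℓ i i := by
        intro i ℓ
        rw [Finset.sum_ite_eq]
        simp
      simp only [h1]
      rw [Finset.sum_comm]
      simp only [← Finset.mul_sum]
    -- piece 2 : i = ℓ
    have hp2 : ∑ i : Fin (n+3), ∑ ℓ, ∑ j, (if i = ℓ then (4:ℝ)^n * 18 * C ℓ i j else 0)
        = (4:ℝ)^n * 18 * ((n:ℝ)+3) := by
      have h1 : ∀ i : Fin (n+3), ∑ ℓ, ∑ j, (if i = ℓ then (4:ℝ)^n * 18 * C ℓ i j else 0)
          = (4:ℝ)^n * 18 := by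
        intro i
        have h2 : ∀ ℓ : Fin (n+3), ∑ j, (if i = ℓ then (4:ℝ)^n * 18 * C ℓ i j else 0)
            = (if i = ℓ then (4:ℝ)^n * 18 * (∑ j, C ℓ i j) else 0) := by
          intro ℓ; split_ifs with h
          · rw [Finset.mul_sum]
          · simp
        simp only [h2]
        rw [Finset.sum_ite_eq]
        simp only [Finset.mem_univ, if_true]
        rw [row_one hC i, mul_one]
      rw [Finset.sum_congr rfl fun i _ => h1 i, Finset.sum_const, Finset.card_univ,
        Fintype.card_fin, nsmul_eq_mul]
      push_cast; ring
    -- piece 3 : j = ℓ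
    have hp3 : ∑ i : Fin (n+3), ∑ ℓ, ∑ j, (if j = ℓ then (4:ℝ)^n * 18 * C ℓ i j else 0)
        = (4:ℝ)^n * 18 * ((n:ℝ)+3) := by
      have h1 : ∀ i ℓ : Fin (n+3), ∑ j, (if j = ℓ then (4:ℝ)^n * 18 * C ℓ i j else 0)
          = (4:ℝ)^n * 18 * C ℓ i ℓ := by
        intro i ℓ
        rw [Finset.sum_ite_eq']
        simp
      simp only [h1]
      rw [Finset.sum_comm]
      have h2 : ∀ ℓ : Fin (n+3), ∑ i, (4:ℝ)^n * 18 * C ℓ i ℓ = (4:ℝ)^n * 18 := by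
        intro ℓ
        rw [← Finset.mul_sum, col_one hC ℓ, mul_one]
      rw [Finset.sum_congr rfl fun ℓ _ => h2 ℓ, Finset.sum_const, Finset.card_univ,
        Fintype.card_fin, nsmul_eq_mul]
      push_cast; ring
    -- piece 4 : i = ℓ ∧ j = ℓ
    have hp4 : ∑ i : Fin (n+3), ∑ ℓ, ∑ j, (if i = ℓ ∧ j = ℓ then (4:ℝ)^n * (-12) * C ℓ i j else 0)
        = (4:ℝ)^n * (-12) * (∑ ℓ, C ℓ ℓ ℓ) := by
      have h1 : ∀ i ℓ : Fin (n+3), ∑ j, (if i = ℓ ∧ j = ℓ then (4:ℝ)^n * (-12) * C ℓ i j else 0)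
          = (if i = ℓ then (4:ℝ)^n * (-12) * C ℓ i ℓ else 0) := by
        intro i ℓ
        by_cases h : i = ℓ
        · simp only [h, true_and, if_pos rfl]
          rw [Finset.sum_ite_eq']
          simp
        · simp [h]
      simp only [h1]
      have h2 : ∀ i : Fin (n+3), ∑ ℓ, (if i = ℓ then (4:ℝ)^n * (-12) * C ℓ i ℓ else 0)
          = (4:ℝ)^n * (-12) * C i i i := by
        intro i
        rw [Finset.sum_ite_eq]
        simp
      simp only [h2]
      rw [← Finset.mul_sum]
    rw [hp0, hp1, hp2, hp3, hp4]
    ring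
  rw [hid] at hbound
  have h4 : (0:ℝ) < 4^n := by positivity
  have hb2 : (4:ℝ)^n * (54*((n:ℝ)+3) - 12*(∑ ℓ, C ℓ ℓ ℓ) + 6*(∑ ℓ, ∑ i, C ℓ i i))
      ≤ (4:ℝ)^n * (48*((n:ℝ)+3) * gMax (n+3) C) :=
    calc (4:ℝ)^n * (54*((n:ℝ)+3) - 12*(∑ ℓ, C ℓ ℓ ℓ) + 6*(∑ ℓ, ∑ i, C ℓ i i))
        ≤ 48 * ((n:ℝ)+3) * 4^n * gMax (n+3) C := hbound
      _ = (4:ℝ)^n * (48*((n:ℝ)+3) * gMax (n+3) C) := by ring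
  have hb3 := (mul_le_mul_iff_right₀ h4).mp hb2
  linarith

end lower

section upper
variable {k : ℕ}

lemma Cstar_apply (hk : 0 < k) (ℓ i j : Fin k) :
    Cstar k ℓ i j = (if i = ℓ then (1:ℝ)/k else 0) + (if j = ℓ then (1:ℝ)/k else 0)
      - 1/(k:ℝ)^2 := by
  have hk0 : (k:ℝ) ≠ 0 := Nat.cast_ne_zero.mpr hk.ne'
  unfold Cstar
  by_cases hi : i = ℓ <;> by_cases hj : j = ℓ <;>
    simp only [hi, hj, if_pos, if_neg, and_self, true_and, false_and, and_false, true_or,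
      or_true, or_self, if_true, if_false, not_false_iff] <;> field_simp <;> ring

lemma rowsum_Cstar (hk : 0 < k) (ℓ i : Fin k) :
    ∑ j, Cstar k ℓ i j = if i = ℓ then 1 else 0 := by
  have hk0 : (k:ℝ) ≠ 0 := Nat.cast_ne_zero.mpr hk.ne'
  rw [Finset.sum_congr rfl fun j _ => Cstar_apply hk ℓ i j]
  rw [Finset.sum_sub_distrib, Finset.sum_add_distrib]
  rw [Finset.sum_const, Finset.sum_ite_eq', Finset.sum_const]
  simp only [Finset.mem_univ, if_true, Finset.card_univ, Fintype.card_fin, nsmul_eq_mul]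
  split_ifs
  · field_simp; ring
  · field_simp; ring

lemma colsum_Cstar (hk : 0 < k) (ℓ j : Fin k) :
    ∑ i, Cstar k ℓ i j = if j = ℓ then 1 else 0 := by
  have hk0 : (k:ℝ) ≠ 0 := Nat.cast_ne_zero.mpr hk.ne'
  rw [Finset.sum_congr rfl fun i _ => Cstar_apply hk ℓ i j]
  rw [Finset.sum_sub_distrib, Finset.sum_add_distrib]
  rw [Finset.sum_const, Finset.sum_ite_eq', Finset.sum_const]
  simp only [Finset.mem_univ, if_true, Finset.card_univ, Fintype.card_fin, nsmul_eq_mul]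
  split_ifs
  · field_simp; ring
  · field_simp; ring

lemma inSk_Cstar (hk : 0 < k) : inSk k (Cstar k) := by
  intro ℓ
  refine ⟨fun i hne => ?_, fun j hne => ?_, ?_⟩
  · rw [rowsum_Cstar hk, if_neg hne]
  · rw [colsum_Cstar hk, if_neg hne]
  · rw [Finset.sum_congr rfl fun i _ => rowsum_Cstar hk ℓ i]
    rw [Finset.sum_ite_eq']
    simp

lemma gPart_Cstar (hk : 0 < k) (s : Finset (Fin k × Fin k)) (ℓ : Fin k) :
    gPart s (Cstar k) ℓ = ((mult s ℓ : ℝ) * k - (s.card : ℝ))/(k:ℝ)^2 := by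
  unfold gPart mult
  rw [Finset.sum_congr rfl fun p _ => Cstar_apply hk ℓ p.1 p.2]
  rw [Finset.sum_sub_distrib, Finset.sum_add_distrib]
  rw [← Finset.sum_filter, ← Finset.sum_filter, Finset.sum_const, Finset.sum_const,
    Finset.sum_const]
  simp only [nsmul_eq_mul]
  have hk0 : (k:ℝ) ≠ 0 := Nat.cast_ne_zero.mpr hk.ne'
  push_cast
  field_simp

lemma sum_mult (s : Finset (Fin k × Fin k)) :
    ∑ ℓ, (mult s ℓ : ℝ) = 2 * (s.card : ℝ) := by
  unfold mult
  push_cast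
  rw [Finset.sum_add_distrib]
  have h1 : ∑ ℓ, ((s.filter fun p => p.1 = ℓ).card : ℝ) = (s.card : ℝ) := by
    have := Finset.card_eq_sum_card_fiberwise (f := fun p : Fin k × Fin k => p.1)
      (s := s) (t := univ) (fun p _ => Finset.mem_univ _)
    rw [this]; push_cast; ring
  have h2 : ∑ ℓ, ((s.filter fun p => p.2 = ℓ).card : ℝ) = (s.card : ℝ) := by
    have := Finset.card_eq_sum_card_fiberwise (f := fun p : Fin k × Fin k => p.2)
      (s := s) (t := univ) (fun p _ => Finset.mem_univ _)
    rw [this]; push_cast; ring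
  rw [h1, h2]; ring

lemma gSample_Cstar_le (hk : 0 < k) {s : Finset (Fin k × Fin k)} (hs : IsSample s) :
    gSample s (Cstar k) ≤ 9/8 := by
  classical
  have hk0 : (k:ℝ) ≠ 0 := Nat.cast_ne_zero.mpr hk.ne'
  have hk2 : (0:ℝ) < (k:ℝ)^2 := by positivity
  set B := s.image Prod.fst ∪ s.image Prod.snd with hB
  have hinj : Set.InjOn Prod.snd (s : Set (Fin k × Fin k)) := by
    intro p hp q hq h
    by_contra hne
    exact hs.2 p (Finset.mem_coe.mp hp) q (Finset.mem_coe.mp hq) hne h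
  have hm_eq : (s.image Prod.snd).card = s.card := Finset.card_image_of_injOn hinj
  have hm1 : 1 ≤ s.card := Finset.card_pos.mpr hs.1
  have hmβ : s.card ≤ B.card := by
    rw [← hm_eq]
    exact Finset.card_le_card Finset.subset_union_right
  have hβk : B.card ≤ k := by simpa using Finset.card_le_univ B
  have hmult0 : ∀ ℓ, ℓ ∉ B → mult s ℓ = 0 := by
    intro ℓ hℓ
    unfold mult
    have e1 : s.filter (fun p => p.1 = ℓ) = ∅ := by
      rw [Finset.filter_eq_empty_iff]
      intro p hp h
      exact hℓ (Finset.mem_union_left _ (Finset.mem_image.mpr ⟨p, hp, h⟩))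
    have e2 : s.filter (fun p => p.2 = ℓ) = ∅ := by
      rw [Finset.filter_eq_empty_iff]
      intro p hp h
      exact hℓ (Finset.mem_union_right _ (Finset.mem_image.mpr ⟨p, hp, h⟩))
    rw [e1, e2]
    simp
  have hmult1 : ∀ ℓ, ℓ ∈ B → 1 ≤ mult s ℓ := by
    intro ℓ hℓ
    unfold mult
    rcases Finset.mem_union.mp hℓ with h | h
    · obtain ⟨p, hp, hpl⟩ := Finset.mem_image.mp h
      have h1 : 0 < (s.filter (fun p => p.1 = ℓ)).card :=
        Finset.card_pos.mpr ⟨p, Finset.mem_filter.mpr ⟨hp, hpl⟩⟩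
      omega
    · obtain ⟨p, hp, hpl⟩ := Finset.mem_image.mp h
      have h1 : 0 < (s.filter (fun p => p.2 = ℓ)).card :=
        Finset.card_pos.mpr ⟨p, Finset.mem_filter.mpr ⟨hp, hpl⟩⟩
      omega
  -- sum of multiplicities over B
  have hsumB : ∑ ℓ ∈ B, (mult s ℓ : ℝ) = 2 * (s.card : ℝ) := by
    have hsplit : ∑ ℓ ∈ univ \ B, (mult s ℓ : ℝ) + ∑ ℓ ∈ B, (mult s ℓ : ℝ)
        = ∑ ℓ, (mult s ℓ : ℝ) := Finset.sum_sdiff (Finset.subset_univ B)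
    have hz : ∑ ℓ ∈ univ \ B, (mult s ℓ : ℝ) = 0 := by
      apply Finset.sum_eq_zero
      intro ℓ hℓ
      rw [hmult0 ℓ (Finset.mem_sdiff.mp hℓ).2]
      simp
    rw [hz, zero_add] at hsplit
    rw [hsplit, sum_mult]
  -- absolute values
  have hvalB : ∀ ℓ ∈ B, |gPart s (Cstar k) ℓ|
      = ((mult s ℓ : ℝ) * k - (s.card : ℝ))/(k:ℝ)^2 := by
    intro ℓ hℓ
    rw [gPart_Cstar hk]
    apply abs_of_nonneg
    apply div_nonneg _ hk2.le
    have h1 : (1:ℝ) ≤ (mult s ℓ : ℝ) := by exact_mod_cast hmult1 ℓ hℓ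
    have h2 : (s.card : ℝ) ≤ (k:ℝ) := by
      exact_mod_cast le_trans hmβ hβk
    nlinarith [(by exact_mod_cast hk : (0:ℝ) < (k:ℝ))]
  have hvalNB : ∀ ℓ ∈ univ \ B, |gPart s (Cstar k) ℓ| = (s.card : ℝ)/(k:ℝ)^2 := by
    intro ℓ hℓ
    rw [gPart_Cstar hk, hmult0 ℓ (Finset.mem_sdiff.mp hℓ).2]
    rw [abs_of_nonpos]
    · push_cast; ring
    · apply div_nonpos_of_nonpos_of_nonneg _ hk2.le
      push_cast
      simp only [zero_mul, zero_sub]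
      have : (0:ℝ) ≤ (s.card : ℝ) := Nat.cast_nonneg _
      linarith
  -- assemble
  have hgs : gSample s (Cstar k)
      = ∑ ℓ ∈ univ \ B, |gPart s (Cstar k) ℓ| + ∑ ℓ ∈ B, |gPart s (Cstar k) ℓ| := by
    unfold gSample
    rw [Finset.sum_sdiff (Finset.subset_univ B)]
  rw [hgs, Finset.sum_congr rfl hvalNB, Finset.sum_congr rfl hvalB]
  rw [Finset.sum_const, Finset.card_sdiff_of_subset (Finset.subset_univ B), Finset.card_univ,
    Fintype.card_fin, nsmul_eq_mul]
  have hsum2 : ∑ ℓ ∈ B, ((mult s ℓ : ℝ) * k - (s.card : ℝ))/(k:ℝ)^2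
      = ((2 * (s.card:ℝ)) * k - (B.card : ℝ) * (s.card : ℝ))/(k:ℝ)^2 := by
    rw [← Finset.sum_div]
    congr 1
    rw [Finset.sum_sub_distrib, ← Finset.sum_mul, hsumB, Finset.sum_const, nsmul_eq_mul]
  rw [hsum2]
  -- final arithmetic
  have hmR : (1:ℝ) ≤ (s.card : ℝ) := by exact_mod_cast hm1
  have hmβR : (s.card : ℝ) ≤ (B.card : ℝ) := by exact_mod_cast hmβ
  have hβkR : (B.card : ℝ) ≤ (k:ℝ) := by exact_mod_cast hβk
  have hcast : ((k - B.card : ℕ) : ℝ) = (k:ℝ) - (B.card : ℝ) := by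
    push_cast [hβk]
    ring
  rw [hcast]
  have hfinal : ((k:ℝ) - (B.card:ℝ)) * ((s.card:ℝ)/(k:ℝ)^2)
      + (2*(s.card:ℝ)*(k:ℝ) - (B.card:ℝ)*(s.card:ℝ))/(k:ℝ)^2
      = (3*(k:ℝ)*(s.card:ℝ) - 2*(B.card:ℝ)*(s.card:ℝ))/(k:ℝ)^2 := by
    field_simp
    ring
  rw [hfinal, div_le_iff₀ hk2]
  nlinarith [sq_nonneg (3*(k:ℝ) - 4*(s.card:ℝ)),
    mul_nonneg (sub_nonneg.mpr hmβR) (by linarith : (0:ℝ) ≤ (s.card:ℝ))]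

lemma gMax_Cstar_le (hk : 0 < k) : gMax k (Cstar k) ≤ 9/8 := by
  haveI : NeZero k := ⟨hk.ne'⟩
  have hne : Nonempty {s : Finset (Fin k × Fin k) // IsSample s} :=
    ⟨⟨({((0 : Fin k), (0 : Fin k))} : Finset (Fin k × Fin k)), by
      constructor
      · exact Finset.singleton_nonempty _
      · intro p hp q hq hpq
        simp only [Finset.mem_singleton] at hp hq
        subst hp; subst hq; exact absurd rfl hpq⟩⟩
  exact ciSup_le fun t => gSample_Cstar_le hk t.2

end upper

section main

/-- combined lower bound certificate -/
lemma master (n : ℕ) {C : Fin (n+3) → Matrix (Fin (n+3)) (Fin (n+3)) ℝ}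
    (hC : inSk (n+3) C) (μ : ℝ) (hμ : 0 < μ) :
    9*((n:ℝ)+3)*μ ≤ (8*((n:ℝ)+3)*μ + (1+μ)^2 + μ^2*((n:ℝ)+3)) * gMax (n+3) C := by
  have hR := hR_ineq n hC
  have hD := hD_ineq n hC μ hμ
  have hF := hF_ineq (k := n+3) (by omega) C
  have hcast : ((n+3 : ℕ) : ℝ) = (n:ℝ)+3 := by push_cast; ring
  rw [hcast] at hF
  have hRμ := mul_le_mul_of_nonneg_left hR hμ.le
  have hFμ := mul_le_mul_of_nonneg_left hF (sq_nonneg μ)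
  nlinarith [hRμ, hD, hFμ]

lemma OvalueSet_nonempty (k : ℕ) (hk : 0 < k) :
    {y | ∃ C, inSk k C ∧ gMax k C = y}.Nonempty :=
  ⟨gMax k (Cstar k), Cstar k, inSk_Cstar hk, rfl⟩

lemma OvalueSet_bddBelow (k : ℕ) (hk : 0 < k) :
    BddBelow {y | ∃ C, inSk k C ∧ gMax k C = y} := by
  refine ⟨0, fun y hy => ?_⟩
  obtain ⟨C, hC, rfl⟩ := hy
  exact gMax_nonneg hk C

lemma Ovalue_le (k : ℕ) (hk : 0 < k) : Ovalue k ≤ 9/8 := by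
  have h : Ovalue k ≤ gMax k (Cstar k) :=
    csInf_le (OvalueSet_bddBelow k hk) ⟨Cstar k, inSk_Cstar hk, rfl⟩
  exact h.trans (gMax_Cstar_le hk)

lemma Ovalue_ge (n : ℕ) (μ : ℝ) (hμ : 0 < μ) :
    9*((n:ℝ)+3)*μ / (8*((n:ℝ)+3)*μ + (1+μ)^2 + μ^2*((n:ℝ)+3)) ≤ Ovalue (n+3) := by
  apply le_csInf (OvalueSet_nonempty (n+3) (by omega))
  rintro y ⟨C, hC, rfl⟩
  have hD : (0:ℝ) < 8*((n:ℝ)+3)*μ + (1+μ)^2 + μ^2*((n:ℝ)+3) := by positivity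
  rw [div_le_iff₀ hD]
  have hM := master n hC μ hμ
  linarith [hM]

/-- quantitative deficiency bound -/
lemma Ovalue_ge' (n : ℕ) (μ : ℝ) (hμ : 0 < μ) (hμ1 : μ ≤ 1) :
    9/8 - (1/(((n:ℝ)+3)*μ) + μ) ≤ Ovalue (n+3) := by
  refine le_trans ?_ (Ovalue_ge n μ hμ)
  set K : ℝ := (n:ℝ)+3 with hK
  have hn0 : (0:ℝ) ≤ (n:ℝ) := Nat.cast_nonneg n
  have hK3 : (3:ℝ) ≤ K := by rw [hK]; linarith
  have hK0 : (0:ℝ) < K := by linarith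
  have hKμ : (0:ℝ) < K*μ := mul_pos hK0 hμ
  set D : ℝ := 8*K*μ + (1+μ)^2 + μ^2*K with hD
  have hD0 : (0:ℝ) < D := by rw [hD]; positivity
  have key : (9/8) * D - 9*K*μ ≤ (1/(K*μ) + μ) * D := by
    have hA : (9/8)*((1+μ)^2) ≤ 8 := by nlinarith
    have hB : (9/8)*(μ^2*K) ≤ 8*K*μ^2 := by nlinarith [sq_nonneg μ]
    have hC1 : (1/(K*μ))*D = 8 + (1/(K*μ))*((1+μ)^2 + μ^2*K) := by
      rw [hD]; field_simp; ring
    have hC1' : (0:ℝ) ≤ (1/(K*μ))*((1+μ)^2 + μ^2*K) := by positivity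
    have hC2 : μ * D = 8*K*μ^2 + μ*((1+μ)^2 + μ^2*K) := by rw [hD]; ring
    have hC2' : (0:ℝ) ≤ μ*((1+μ)^2 + μ^2*K) := by positivity
    have hE : (9/8)*D - 9*K*μ = (9/8)*((1+μ)^2) + (9/8)*(μ^2*K) := by rw [hD]; ring
    have hsplit : (1/(K*μ)+μ)*D = (1/(K*μ))*D + μ*D := by ring
    nlinarith [hA, hB, hC1, hC1', hC2, hC2', hE, hsplit]
  have hq : 9*K*μ/D * D = 9*K*μ := div_mul_cancel₀ _ hD0.ne'
  have hgoal : 9/8 - (1/(K*μ) + μ) ≤ 9*K*μ/D := by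
    by_contra hcon
    push_neg at hcon
    have h2 : (9/8 - (1/(K*μ) + μ)) * D > (9*K*μ/D) * D :=
      mul_lt_mul_of_pos_right hcon hD0
    rw [hq] at h2
    nlinarith [key]
  exact hgoal

end main

theorem stmt7 :
    (∀ k : ℕ, 3 ≤ k → Ovalue k ≤ 9/8) ∧
    Filter.Tendsto Ovalue Filter.atTop (nhds (9/8)) := by
  constructor
  · intro k hk
    exact Ovalue_le k (by omega)
  · rw [Metric.tendsto_atTop]
    intro ε hε
    set μ : ℝ := min 1 (ε/2) with hμdef
    have hμ0 : 0 < μ := lt_min one_pos (by linarith)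
    have hμ1 : μ ≤ 1 := min_le_left _ _
    have hμε : μ ≤ ε/2 := min_le_right _ _
    use max 3 (⌈2/(ε*μ)⌉₊ + 4)
    intro k hk
    have hk3 : 3 ≤ k := le_trans (le_max_left _ _) hk
    obtain ⟨n, rfl⟩ : ∃ n, k = n + 3 := ⟨k - 3, by omega⟩
    have hupper : Ovalue (n+3) ≤ 9/8 := Ovalue_le (n+3) (by omega)
    have hlower := Ovalue_ge' n μ hμ0 hμ1
    -- 1/((n+3)μ) < ε/2
    have hbig : (2:ℝ)/(ε*μ) < ((n:ℝ)+3) := by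
      have h1 : (⌈2/(ε*μ)⌉₊ + 4 : ℕ) ≤ n + 3 := le_trans (le_max_right _ _) hk
      have h2 : (2:ℝ)/(ε*μ) ≤ (⌈2/(ε*μ)⌉₊ : ℝ) := Nat.le_ceil _
      have h3 : ((⌈2/(ε*μ)⌉₊ + 4 : ℕ) : ℝ) ≤ (n:ℝ)+3 := by exact_mod_cast h1
      push_cast at h3
      linarith
    have hεμ : (0:ℝ) < ε*μ := mul_pos hε hμ0
    have hsmall : 1/(((n:ℝ)+3)*μ) < ε/2 := by
      rw [div_lt_iff₀ (by positivity)]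
      rw [div_lt_iff₀ hεμ] at hbig
      nlinarith
    rw [Real.dist_eq, abs_lt]
    constructor <;> linarith
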